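/- Let n ≥ 1, t0 ∈ ℝ, y0 ∈ ℝ^n, and let a, b, L > 0 with a ≤ b/L. If f : [t0, t0+a] × {y ∈ ℝ^n : ‖y − y0‖ ≤ b} → ℝ^n is continuous and satisfies ‖f(t,y)‖ ≤ L on its domain (‖·‖ the maximum norm), then there exists a differentiable function φ : [t0, t0+a] → ℝ^n with φ(t0) = y0, ‖φ(t) − y0‖ ≤ b for all t, and φ'(t) = f(t, φ(t)) for all t ∈ [t0, t0+a]. -/

import Mathlib

open Set Metric Filter Topology

set_option linter.unusedSectionVars false
set_option linter.unusedVariables false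
open Set Metric

section InfConv
variable {α : Type*} [PseudoMetricSpace α] [Nonempty α]

noncomputable def infConv (g : α → ℝ) (k : ℝ) (p : α) : ℝ := ⨅ q : α, (g q + k * dist p q)

variable {g : α → ℝ} {k L : ℝ}

theorem infConv_bdd (hg : ∀ p, |g p| ≤ L) (hk : 0 ≤ k) (p : α) :
    BddBelow (Set.range fun q : α => g q + k * dist p q) := by
  refine ⟨-L, ?_⟩
  rintro _ ⟨q, rfl⟩
  dsimp only
  have h1 := (abs_le.1 (hg q)).1
  nlinarith [dist_nonneg (x := p) (y := q)]

theorem infConv_le (hg : ∀ p, |g p| ≤ L) (hk : 0 ≤ k) (p : α) : infConv g k p ≤ g p := by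
  have := ciInf_le (infConv_bdd hg hk p) p
  simpa [infConv] using this

theorem neg_le_infConv (hg : ∀ p, |g p| ≤ L) (hk : 0 ≤ k) (p : α) : -L ≤ infConv g k p := by
  refine le_ciInf fun q => ?_
  have h1 := (abs_le.1 (hg q)).1
  nlinarith [dist_nonneg (x := p) (y := q)]

theorem infConv_lipschitz (hg : ∀ p, |g p| ≤ L) (hk : 0 ≤ k) (p p' : α) :
    infConv g k p ≤ infConv g k p' + k * dist p p' := by
  rw [← sub_le_iff_le_add]
  refine le_ciInf fun q => ?_
  rw [sub_le_iff_le_add]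
  calc infConv g k p ≤ g q + k * dist p q := ciInf_le (infConv_bdd hg hk p) q
    _ ≤ g q + k * dist p' q + k * dist p p' := by
        have := dist_triangle p' p q
        have := dist_triangle p p' q
        nlinarith [dist_comm p p']

theorem le_infConv (hg : ∀ p, |g p| ≤ L) (hk : 0 ≤ k) {p : α} {δ ε : ℝ}
    (hδ : ∀ q, dist p q ≤ δ → g p - g q ≤ ε) (hkδ : 2 * L ≤ k * δ) (hε : 0 ≤ ε) :
    g p - ε ≤ infConv g k p := by
  refine le_ciInf fun q => ?_
  rcases le_or_gt (dist p q) δ with h | h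
  · have := hδ q h
    nlinarith [dist_nonneg (x := p) (y := q)]
  · have h1 := (abs_le.1 (hg q)).1
    have h2 := (abs_le.1 (hg p)).2
    nlinarith [mul_le_mul_of_nonneg_left h.le hk]

end InfConv

section InfConvPi
set_option linter.unusedSectionVars false
variable {α : Type*} [PseudoMetricSpace α] [Nonempty α] {n : ℕ}

noncomputable def infConvPi (G : α → Fin n → ℝ) (k : ℝ) (p : α) : Fin n → ℝ :=
  fun i => infConv (fun q => G q i) k p

variable {G : α → Fin n → ℝ} {k L : ℝ}

theorem comp_abs_le (hG : ∀ p, ‖G p‖ ≤ L) (i : Fin n) (p : α) : |G p i| ≤ L :=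
  (norm_le_pi_norm (G p) i).trans (hG p)

theorem infConvPi_norm_le (hG : ∀ p, ‖G p‖ ≤ L) (hk : 0 ≤ k) (hL : 0 ≤ L) (p : α) :
    ‖infConvPi G k p‖ ≤ L := by
  rw [pi_norm_le_iff_of_nonneg hL]
  intro i
  rw [Real.norm_eq_abs, abs_le]
  constructor
  · exact neg_le_infConv (comp_abs_le hG i) hk p
  · exact (infConv_le (comp_abs_le hG i) hk p).trans (abs_le.1 (comp_abs_le hG i p)).2

theorem infConvPi_lipschitz (hG : ∀ p, ‖G p‖ ≤ L) (hk : 0 ≤ k) (p p' : α) :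
    dist (infConvPi G k p) (infConvPi G k p') ≤ k * dist p p' := by
  rw [dist_pi_le_iff (by positivity)]
  intro i
  rw [Real.dist_eq, abs_le]
  constructor
  · have := infConv_lipschitz (g := fun q => G q i) (comp_abs_le hG i) hk p' p
    rw [dist_comm p' p] at this
    simp only [infConvPi]; linarith
  · have := infConv_lipschitz (g := fun q => G q i) (comp_abs_le hG i) hk p p'
    simp only [infConvPi]; linarith

theorem infConvPi_close (hG : ∀ p, ‖G p‖ ≤ L) (hGu : UniformContinuous G) (hL : 0 ≤ L)
    {ε : ℝ} (hε : 0 < ε) :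
    ∃ K : ℝ, 0 ≤ K ∧ ∀ k, K ≤ k → ∀ p, ‖infConvPi G k p - G p‖ ≤ ε := by
  obtain ⟨δ, hδ0, hδ⟩ := Metric.uniformContinuous_iff.1 hGu ε hε
  refine ⟨max 0 (2 * L / (δ / 2)), le_max_left _ _, fun k hk p => ?_⟩
  have hk0 : 0 ≤ k := le_trans (le_max_left _ _) hk
  rw [pi_norm_le_iff_of_nonneg hε.le]
  intro i
  rw [Pi.sub_apply, Real.norm_eq_abs, abs_le]
  have hcomp : ∀ q, dist p q ≤ δ / 2 → G p i - G q i ≤ ε := by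
    intro q hq
    have h1 : dist (G p) (G q) < ε := hδ (lt_of_le_of_lt hq (by linarith))
    have h2 : dist (G p i) (G q i) ≤ dist (G p) (G q) := dist_le_pi_dist _ _ i
    rw [Real.dist_eq] at h2
    have := (abs_le.1 (h2.trans h1.le)).2
    linarith
  have hkδ : 2 * L ≤ k * (δ / 2) := by
    have h1 : 2 * L / (δ / 2) ≤ k := le_trans (le_max_right _ _) hk
    rw [div_le_iff₀ (by linarith)] at h1
    linarith
  constructor
  · have := le_infConv (comp_abs_le hG i) hk0 hcomp hkδ hε.le
    simp only [infConvPi]; linarith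
  · have := infConv_le (comp_abs_le hG i) hk0 p
    simp only [infConvPi]; linarith
end InfConvPi


theorem ascoli_step {n : ℕ} {t0 a L : ℝ} (hL : 0 < L)
    (y0 : Fin n → ℝ) (x0 : Icc t0 (t0 + a)) (hIcc : t0 ≤ t0 + a)
    (ψ : ℕ → C(Icc t0 (t0 + a), Fin n → ℝ))
    (h0 : ∀ k, ψ k x0 = y0)
    (hlip : ∀ k x y, dist (ψ k x) (ψ k y) ≤ L * dist x y) :
    ∃ (g : C(Icc t0 (t0 + a), Fin n → ℝ)) (u : ℕ → ℕ), StrictMono u ∧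
      g x0 = y0 ∧ (∀ x y, dist (g x) (g y) ≤ L * dist x y) ∧
      TendstoUniformly (fun j => ⇑(ψ (u j))) (⇑g) Filter.atTop := by
  set S : Set C(Icc t0 (t0 + a), Fin n → ℝ) :=
    {g | g x0 = y0 ∧ ∀ x y, dist (g x) (g y) ≤ L * dist x y} with hS
  set T : Set (Icc t0 (t0 + a) → Fin n → ℝ) :=
    {u | u x0 = y0 ∧ ∀ x y, dist (u x) (u y) ≤ L * dist x y} with hT
  have himg : ContinuousMap.toFun '' S = T := by
    apply Subset.antisymm
    · rintro _ ⟨g, hg, rfl⟩; exact hg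
    · intro u hu
      have hc : Continuous u := by
        have : LipschitzWith L.toNNReal u :=
          LipschitzWith.of_dist_le_mul fun x y => by
            rw [Real.coe_toNNReal _ hL.le]; exact hu.2 x y
        exact this.continuous
      exact ⟨⟨u, hc⟩, hu, rfl⟩
  have hTclosed : IsClosed T := by
    have : T = {u : Icc t0 (t0 + a) → Fin n → ℝ | u x0 = y0} ∩
        ⋂ (x) (y), {u | dist (u x) (u y) ≤ L * dist x y} := by
      ext u
      simp only [hT, Set.mem_setOf_eq, Set.mem_inter_iff, Set.mem_iInter]
    rw [this]
    refine IsClosed.inter (isClosed_eq (continuous_apply x0) continuous_const) ?_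
    refine isClosed_iInter fun x => isClosed_iInter fun y => ?_
    exact isClosed_le ((continuous_apply x).dist (continuous_apply y)) continuous_const
  have hdistX : ∀ x y : Icc t0 (t0 + a), dist x y ≤ a := by
    intro x y
    rw [Subtype.dist_eq, Real.dist_eq, abs_le]
    obtain ⟨hx1, hx2⟩ := x.2; obtain ⟨hy1, hy2⟩ := y.2
    constructor <;> linarith
  have hTsub : T ⊆ Set.pi univ fun _ : Icc t0 (t0 + a) => closedBall y0 (L * a) := by
    intro u hu x _
    rw [mem_closedBall]
    calc dist (u x) y0 = dist (u x) (u x0) := by rw [hu.1]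
      _ ≤ L * dist x x0 := hu.2 x x0
      _ ≤ L * a := by have := hdistX x x0; nlinarith [dist_nonneg (x := x) (y := x0)]
  have hTcompact : IsCompact T :=
    IsCompact.of_isClosed_subset (isCompact_univ_pi fun _ => isCompact_closedBall _ _)
      hTclosed hTsub
  have hS2 : Equicontinuous ((↑) : S → Icc t0 (t0 + a) → Fin n → ℝ) := by
    intro x
    rw [Metric.equicontinuousAt_iff]
    intro ε hε
    refine ⟨ε / L, by positivity, fun y hy i => ?_⟩
    calc dist (i.1 x) (i.1 y) ≤ L * dist x y := i.2.2 x y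
      _ < L * (ε / L) := by
          rw [dist_comm x y]
          exact mul_lt_mul_of_pos_left hy hL
      _ = ε := by field_simp
  have hScompact : IsCompact S :=
    ArzelaAscoli.isCompact_of_equicontinuous S (himg ▸ hTcompact) hS2
  obtain ⟨g, hgS, u, hu, htend⟩ :=
    hScompact.isSeqCompact (x := ψ) fun k => show ψ k ∈ S from ⟨h0 k, hlip k⟩
  refine ⟨g, u, hu, hgS.1, hgS.2, ?_⟩
  have := ContinuousMap.tendsto_iff_tendstoUniformly.mp htend
  simpa [Function.comp] using this

theorem peano_global (n : ℕ) (t0 : ℝ) (y0 : Fin n → ℝ) (a L : ℝ) (ha : 0 < a) (hL : 0 < L)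
    (F : ℝ → (Fin n → ℝ) → (Fin n → ℝ))
    (hFu : UniformContinuous (fun p : ℝ × (Fin n → ℝ) => F p.1 p.2))
    (hFL : ∀ t y, ‖F t y‖ ≤ L) :
    ∃ φ : ℝ → Fin n → ℝ, φ t0 = y0 ∧
      (∀ t ∈ Icc t0 (t0 + a), ‖φ t - y0‖ ≤ L * (t - t0)) ∧
      (∀ t ∈ Icc t0 (t0 + a), HasDerivWithinAt φ (F t (φ t)) (Icc t0 (t0 + a)) t) := by
  have hIcc : t0 ≤ t0 + a := by linarith
  set G : ℝ × (Fin n → ℝ) → Fin n → ℝ := fun p => F p.1 p.2 with hGdef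
  have hGL : ∀ p, ‖G p‖ ≤ L := fun p => hFL p.1 p.2
  -- Step 1 : approximate solutions via Picard-Lindelöf
  have key : ∀ k : ℕ, ∃ φ : ℝ → Fin n → ℝ, φ t0 = y0 ∧
      ∀ t ∈ Icc t0 (t0 + a),
        HasDerivWithinAt φ (infConvPi G k (t, φ t)) (Icc t0 (t0 + a)) t := by
    intro k
    have hlipG : LipschitzWith (Real.toNNReal k) (infConvPi G (k : ℝ)) :=
      LipschitzWith.of_dist_le_mul fun p q => by
        rw [Real.coe_toNNReal _ (Nat.cast_nonneg k)]
        exact infConvPi_lipschitz hGL (Nat.cast_nonneg k) p q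
    have hpl : IsPicardLindelof (fun t y => infConvPi G k (t, y)) (tmin := t0) (tmax := t0 + a)
        ⟨t0, left_mem_Icc.mpr hIcc⟩ y0 (L * a).toNNReal 0 L.toNNReal (Real.toNNReal k) := by
      constructor
      · intro t ht
        refine LipschitzOnWith.of_dist_le_mul fun y _ y' _ => ?_
        calc dist (infConvPi G (k:ℝ) (t, y)) (infConvPi G (k:ℝ) (t, y'))
            ≤ k * dist (t, y) (t, y') := infConvPi_lipschitz hGL (Nat.cast_nonneg k) _ _
          _ = (Real.toNNReal k) * dist y y' := by
              rw [Prod.dist_eq, dist_self, Real.coe_toNNReal _ (Nat.cast_nonneg k),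
                max_eq_right dist_nonneg]
      · intro y _
        exact (hlipG.comp ((LipschitzWith.prodMk_right y).weaken le_rfl)).continuous.continuousOn
      · intro t _ y _
        rw [Real.coe_toNNReal _ hL.le]
        exact infConvPi_norm_le hGL (Nat.cast_nonneg k) hL.le _
      · have : max (t0 + a - t0) (t0 - t0) = a := by
          rw [max_eq_left] <;> linarith
        have h1 : ((⟨t0, left_mem_Icc.mpr hIcc⟩ : Icc t0 (t0 + a)) : ℝ) = t0 := rfl
        simp only [h1, this, sub_zero, NNReal.coe_zero, Real.coe_toNNReal _ hL.le,
          Real.coe_toNNReal _ (mul_nonneg hL.le ha.le)]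
        exact le_rfl
    obtain ⟨φ, hφ0, hφd⟩ := hpl.exists_eq_forall_mem_Icc_hasDerivWithinAt₀
    exact ⟨φ, hφ0, hφd⟩
  choose φ hφ0 hφd using key
  -- Lipschitz bound on the approximants
  have hφlip : ∀ k, ∀ x ∈ Icc t0 (t0 + a), ∀ y ∈ Icc t0 (t0 + a),
      ‖φ k x - φ k y‖ ≤ L * ‖x - y‖ := by
    intro k x hx y hy
    exact Convex.norm_image_sub_le_of_norm_hasDerivWithin_le
      (f' := fun t => infConvPi G k (t, φ k t)) (hφd k)
      (fun t _ => infConvPi_norm_le hGL (Nat.cast_nonneg k) hL.le _) (convex_Icc _ _) hy hx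
  have hφcont : ∀ k, ContinuousOn (φ k) (Icc t0 (t0 + a)) :=
    fun k t ht => (hφd k t ht).continuousWithinAt
  -- restrict to continuous maps on the compact interval
  set x0 : Icc t0 (t0 + a) := ⟨t0, left_mem_Icc.mpr hIcc⟩ with hx0
  have hψc : ∀ k, Continuous fun x : Icc t0 (t0 + a) => φ k x :=
    fun k => continuousOn_iff_continuous_restrict.mp (hφcont k)
  set ψ : ℕ → C(Icc t0 (t0 + a), Fin n → ℝ) := fun k => ⟨_, hψc k⟩ with hψdef
  obtain ⟨g, u, hu, hg0, hglip, htu⟩ := ascoli_step hL y0 x0 hIcc ψ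
    (fun k => hφ0 k)
    (fun k x y => by
      simp only [hψdef, ContinuousMap.coe_mk]
      rw [dist_eq_norm, Subtype.dist_eq, Real.dist_eq, ← Real.norm_eq_abs]
      exact hφlip k x x.2 y y.2)
  -- the candidate solution
  set Φ : ℝ → Fin n → ℝ := fun t => g (projIcc t0 (t0 + a) hIcc t) with hΦdef
  have hΦcont : Continuous Φ := g.continuous.comp continuous_projIcc
  have hΦeq : ∀ t (ht : t ∈ Icc t0 (t0 + a)), Φ t = g ⟨t, ht⟩ := by
    intro t ht
    simp only [hΦdef, projIcc_of_mem hIcc ht]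
  -- integral identity for the approximants
  have hint : ∀ k, ∀ t ∈ Icc t0 (t0 + a),
      φ k t = y0 + ∫ s in t0..t, infConvPi G k (s, φ k s) := by
    intro k t ht
    have hsub : Icc t0 t ⊆ Icc t0 (t0 + a) := Icc_subset_Icc le_rfl ht.2
    have hcont2 : ContinuousOn (fun s => infConvPi G (k : ℝ) (s, φ k s)) (Icc t0 (t0 + a)) := by
      have hlipG : LipschitzWith (Real.toNNReal k) (infConvPi G (k : ℝ)) :=
        LipschitzWith.of_dist_le_mul fun p q => by
          rw [Real.coe_toNNReal _ (Nat.cast_nonneg k)]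
          exact infConvPi_lipschitz hGL (Nat.cast_nonneg k) p q
      exact hlipG.continuous.comp_continuousOn
        (continuousOn_id.prodMk (hφcont k))
    have heq : (∫ s in t0..t, infConvPi G k (s, φ k s)) = φ k t - φ k t0 := by
      apply intervalIntegral.integral_eq_sub_of_hasDeriv_right_of_le ht.1
        ((hφcont k).mono hsub)
      · intro s hs
        have hs' : s ∈ Ioo t0 (t0 + a) := ⟨hs.1, lt_of_lt_of_le hs.2 ht.2⟩
        have : HasDerivAt (φ k) (infConvPi G k (s, φ k s)) s :=
          (hφd k s (Ioo_subset_Icc_self hs')).hasDerivAt (Icc_mem_nhds hs'.1 hs'.2)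
        exact this.hasDerivWithinAt
      · exact (hcont2.mono (by rw [uIcc_of_le ht.1]; exact hsub)).intervalIntegrable
    rw [heq, hφ0 k]
    abel
  -- continuity of the limit integrand
  have hGcont : Continuous G := hFu.continuous
  have hΦint : Continuous fun s => G (s, Φ s) :=
    hGcont.comp (continuous_id.prodMk hΦcont)
  -- pass to the limit in the integral identity
  have hlim : ∀ t, t ∈ Icc t0 (t0 + a) → Φ t = y0 + ∫ s in t0..t, G (s, Φ s) := by
    intro t ht
    have h1 : Tendsto (fun j => φ (u j) t) atTop (𝓝 (Φ t)) := by
      rw [hΦeq t ht]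
      exact htu.tendsto_at ⟨t, ht⟩
    have h2 : Tendsto (fun j => ∫ s in t0..t, infConvPi G (u j) (s, φ (u j) s)) atTop
        (𝓝 (∫ s in t0..t, G (s, Φ s))) := by
      rw [Metric.tendsto_atTop]
      intro ε hε
      have hε' : 0 < ε / (2 * (a + 1)) := by positivity
      obtain ⟨K, hK0, hKcl⟩ := infConvPi_close hGL hFu hL.le hε'
      obtain ⟨δ, hδ0, hδ⟩ := Metric.uniformContinuous_iff.1 hFu _ hε'
      have hev1 := (Metric.tendstoUniformly_iff.1 htu) δ hδ0
      have hev2 : ∀ᶠ j in atTop, K ≤ ((u j : ℕ) : ℝ) := by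
        filter_upwards [eventually_ge_atTop ⌈K⌉₊] with j hj
        calc K ≤ (⌈K⌉₊ : ℝ) := Nat.le_ceil K
          _ ≤ (j : ℝ) := by exact_mod_cast hj
          _ ≤ ((u j : ℕ) : ℝ) := by exact_mod_cast hu.le_apply
      rw [eventually_atTop] at hev1 hev2
      obtain ⟨N1, hN1⟩ := hev1; obtain ⟨N2, hN2⟩ := hev2
      refine ⟨max N1 N2, fun j hj => ?_⟩
      have hj1 := hN1 j (le_trans (le_max_left _ _) hj)
      have hj2 := hN2 j (le_trans (le_max_right _ _) hj)
      -- integrability of the two integrands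
      have hi2 : IntervalIntegrable (fun s => G (s, Φ s)) MeasureTheory.volume t0 t :=
        hΦint.intervalIntegrable _ _
      have hi1 : IntervalIntegrable (fun s => infConvPi G (u j) (s, φ (u j) s))
          MeasureTheory.volume t0 t := by
        have hlipG : LipschitzWith (Real.toNNReal (u j)) (infConvPi G ((u j : ℕ) : ℝ)) :=
          LipschitzWith.of_dist_le_mul fun p q => by
            rw [Real.coe_toNNReal _ (Nat.cast_nonneg _)]
            exact infConvPi_lipschitz hGL (Nat.cast_nonneg _) p q
        have : ContinuousOn (fun s => infConvPi G ((u j : ℕ) : ℝ) (s, φ (u j) s))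
            (uIcc t0 t) := by
          refine (hlipG.continuous.comp_continuousOn (continuousOn_id.prodMk
            ((hφcont (u j)).mono ?_)))
          rw [uIcc_of_le ht.1]
          exact Icc_subset_Icc le_rfl ht.2
        exact this.intervalIntegrable
      rw [dist_eq_norm, ← intervalIntegral.integral_sub hi1 hi2]
      have hbound : ∀ s ∈ Set.uIoc t0 t,
          ‖infConvPi G (u j) (s, φ (u j) s) - G (s, Φ s)‖ ≤
            ε / (2 * (a + 1)) + ε / (2 * (a + 1)) := by
        intro s hs
        rw [Set.uIoc_of_le ht.1] at hs
        have hsI : s ∈ Icc t0 (t0 + a) := ⟨hs.1.le, hs.2.trans ht.2⟩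
        have hA : ‖infConvPi G (u j) (s, φ (u j) s) - G (s, φ (u j) s)‖ ≤ ε / (2 * (a + 1)) :=
          hKcl _ hj2 _
        have hB : ‖G (s, φ (u j) s) - G (s, Φ s)‖ ≤ ε / (2 * (a + 1)) := by
          rw [← dist_eq_norm]
          have hd : dist ((s, φ (u j) s) : ℝ × (Fin n → ℝ)) (s, Φ s) < δ := by
            rw [Prod.dist_eq, dist_self, max_eq_right dist_nonneg, hΦeq s hsI]
            have := hj1 ⟨s, hsI⟩
            rw [dist_comm] at this
            exact this
          exact (hδ hd).le
        calc ‖infConvPi G (u j) (s, φ (u j) s) - G (s, Φ s)‖ ≤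
            ‖infConvPi G (u j) (s, φ (u j) s) - G (s, φ (u j) s)‖ +
            ‖G (s, φ (u j) s) - G (s, Φ s)‖ := by
              have := norm_sub_le_norm_sub_add_norm_sub
                (infConvPi G (u j) (s, φ (u j) s)) (G (s, φ (u j) s)) (G (s, Φ s))
              exact this
          _ ≤ _ := add_le_add hA hB
      have := intervalIntegral.norm_integral_le_of_norm_le_const hbound
      have habs : |t - t0| ≤ a := by
        rw [abs_le]; obtain ⟨h1', h2'⟩ := ht; constructor <;> linarith
      calc ‖∫ s in t0..t, (infConvPi G (u j) (s, φ (u j) s) - G (s, Φ s))‖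
          ≤ (ε / (2 * (a + 1)) + ε / (2 * (a + 1))) * |t - t0| := this
        _ ≤ (ε / (2 * (a + 1)) + ε / (2 * (a + 1))) * a := by
            have h0 : 0 ≤ ε / (2 * (a + 1)) + ε / (2 * (a + 1)) := by positivity
            exact mul_le_mul_of_nonneg_left habs h0
        _ < ε := by
            rw [← add_div, div_mul_eq_mul_div, div_lt_iff₀ (by positivity)]
            nlinarith
    have h2' : Tendsto (fun j => φ (u j) t) atTop (𝓝 (y0 + ∫ s in t0..t, G (s, Φ s))) := by
      have : (fun j => φ (u j) t) =
          fun j => y0 + ∫ s in t0..t, infConvPi G (u j) (s, φ (u j) s) :=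
        funext fun j => hint (u j) t ht
      rw [this]
      exact tendsto_const_nhds.add h2
    exact tendsto_nhds_unique h1 h2'
  -- conclusion
  refine ⟨Φ, ?_, ?_, ?_⟩
  · rw [hΦeq t0 (left_mem_Icc.mpr hIcc)]
    exact hg0
  · intro t ht
    have := hlim t ht
    have heq : Φ t - y0 = ∫ s in t0..t, G (s, Φ s) := by rw [this]; abel
    rw [heq]
    calc ‖∫ s in t0..t, G (s, Φ s)‖ ≤ L * |t - t0| :=
        intervalIntegral.norm_integral_le_of_norm_le_const (a := t0) (b := t) (C := L)
          (fun s _ => hGL (s, Φ s))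
      _ = L * (t - t0) := by rw [abs_of_nonneg (by linarith [ht.1])]
  · intro t ht
    have hd : HasDerivAt (fun τ => y0 + ∫ s in t0..τ, G (s, Φ s)) (G (t, Φ t)) t := by
      have := intervalIntegral.integral_hasDerivAt_right
        (hΦint.intervalIntegrable t0 t)
        (hΦint.stronglyMeasurableAtFilter _ _)
        hΦint.continuousAt
      simpa using (this.const_add y0)
    exact (hd.hasDerivWithinAt.congr (fun s hs => hlim s hs) (hlim t ht))


/-- If `f` is continuous and bounded by `L` on `[t0, t0+a] × closedBall y0 b`
(sup norm on `ℝⁿ = Fin n → ℝ`) and `a ≤ b / L`, then the IVP has a solution on the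
whole interval `[t0, t0 + a]`. -/
theorem peano_whole_interval (n : ℕ) (hn : 1 ≤ n) (t0 : ℝ) (y0 : Fin n → ℝ)
    (a b L : ℝ) (ha : 0 < a) (hb : 0 < b) (hL : 0 < L) (haL : a ≤ b / L)
    (f : ℝ → (Fin n → ℝ) → (Fin n → ℝ))
    (hf : ContinuousOn (fun p : ℝ × (Fin n → ℝ) => f p.1 p.2)
      (Icc t0 (t0 + a) ×ˢ Metric.closedBall y0 b))
    (hfL : ∀ t ∈ Icc t0 (t0 + a), ∀ y ∈ Metric.closedBall y0 b, ‖f t y‖ ≤ L) :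
    ∃ φ : ℝ → Fin n → ℝ,
      φ t0 = y0 ∧
      (∀ t ∈ Icc t0 (t0 + a), ‖φ t - y0‖ ≤ b) ∧
      (∀ t ∈ Icc t0 (t0 + a),
        HasDerivWithinAt φ (f t (φ t)) (Icc t0 (t0 + a)) t) := by
  have hIcc : t0 ≤ t0 + a := by linarith
  have hLab : L * a ≤ b := by
    rw [le_div_iff₀ hL] at haL
    linarith
  -- clamping projections
  set πt : ℝ → ℝ := fun t => max t0 (min t (t0 + a)) with hπt
  set πy : (Fin n → ℝ) → (Fin n → ℝ) := fun y i => y0 i + max (-b) (min (y i - y0 i) b)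
    with hπy
  have hπt_mem : ∀ t, πt t ∈ Icc t0 (t0 + a) :=
    fun t => ⟨le_max_left _ _, max_le hIcc (min_le_right _ _)⟩
  have hπt_eq : ∀ t ∈ Icc t0 (t0 + a), πt t = t := by
    intro t ht
    simp only [hπt]
    rw [min_eq_left ht.2, max_eq_right ht.1]
  have hπy_mem : ∀ y, πy y ∈ Metric.closedBall y0 b := by
    intro y
    rw [mem_closedBall, dist_pi_le_iff hb.le]
    intro i
    rw [Real.dist_eq]
    simp only [hπy]
    rw [abs_le]
    constructor
    · simp only [add_sub_cancel_left]
      exact le_max_left _ _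
    · simp only [add_sub_cancel_left]
      exact max_le (by linarith) (min_le_right _ _)
  have hπy_eq : ∀ y ∈ Metric.closedBall y0 b, πy y = y := by
    intro y hy
    funext i
    have hyi : |y i - y0 i| ≤ b := by
      have h1 : dist (y i) (y0 i) ≤ dist y y0 := dist_le_pi_dist y y0 i
      rw [Real.dist_eq] at h1
      exact h1.trans (mem_closedBall.mp hy)
    rw [abs_le] at hyi
    simp only [hπy]
    rw [min_eq_left hyi.2, max_eq_right hyi.1]
    ring
  -- the extended field
  set F : ℝ → (Fin n → ℝ) → (Fin n → ℝ) := fun t y => f (πt t) (πy y) with hF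
  set K : Set (ℝ × (Fin n → ℝ)) := Icc t0 (t0 + a) ×ˢ Metric.closedBall y0 b with hK
  have hKcompact : IsCompact K := isCompact_Icc.prod (isCompact_closedBall y0 b)
  haveI : CompactSpace K := isCompact_iff_compactSpace.mp hKcompact
  -- the clamping map is Lipschitz
  have hP : LipschitzWith 1 (fun p : ℝ × (Fin n → ℝ) => ((πt p.1, πy p.2) : ℝ × (Fin n → ℝ))) := by
    refine LipschitzWith.of_dist_le_mul fun p q => ?_
    rw [NNReal.coe_one, one_mul, Prod.dist_eq (x := (πt p.1, πy p.2))]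
    refine max_le ?_ ?_
    · have h1 : dist (πt p.1) (πt q.1) ≤ dist p.1 q.1 := by
        simp only [hπt, Real.dist_eq]
        calc |max t0 (min p.1 (t0 + a)) - max t0 (min q.1 (t0 + a))|
            ≤ |min p.1 (t0 + a) - min q.1 (t0 + a)| := by
              rw [max_comm t0, max_comm t0]
              exact abs_max_sub_max_le_abs _ _ _
          _ ≤ |p.1 - q.1| := by
              have := abs_min_sub_min_le_max p.1 (t0 + a) q.1 (t0 + a)
              simpa using this
      exact h1.trans (le_max_left _ _)
    · have h2 : dist (πy p.2) (πy q.2) ≤ dist p.2 q.2 := by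
        rw [dist_pi_le_iff dist_nonneg]
        intro i
        simp only [hπy, Real.dist_eq, add_sub_add_left_eq_sub]
        calc |max (-b) (min (p.2 i - y0 i) b) - max (-b) (min (q.2 i - y0 i) b)|
            ≤ |min (p.2 i - y0 i) b - min (q.2 i - y0 i) b| := by
              rw [max_comm (-b), max_comm (-b)]
              exact abs_max_sub_max_le_abs _ _ _
          _ ≤ |(p.2 i - y0 i) - (q.2 i - y0 i)| := by
              have := abs_min_sub_min_le_max (p.2 i - y0 i) b (q.2 i - y0 i) b
              simpa using this
          _ = |p.2 i - q.2 i| := by ring_nf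
          _ ≤ dist p.2 q.2 := by
              rw [← Real.dist_eq]
              exact dist_le_pi_dist _ _ i
      exact h2.trans (le_max_right _ _)
  -- uniform continuity of F
  have hFu : UniformContinuous (fun p : ℝ × (Fin n → ℝ) => F p.1 p.2) := by
    have hfK : UniformContinuous (K.restrict fun p : ℝ × (Fin n → ℝ) => f p.1 p.2) :=
      CompactSpace.uniformContinuous_of_continuous (continuousOn_iff_continuous_restrict.mp hf)
    have hP' : UniformContinuous fun p : ℝ × (Fin n → ℝ) =>
        (⟨(πt p.1, πy p.2), mem_prod.mpr ⟨hπt_mem p.1, hπy_mem p.2⟩⟩ : K) :=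
      UniformContinuous.subtype_mk hP.uniformContinuous _
    exact hfK.comp hP'
  have hFL : ∀ t y, ‖F t y‖ ≤ L := fun t y => hfL _ (hπt_mem t) _ (hπy_mem y)
  obtain ⟨φ, hφ0, hφb, hφd⟩ := peano_global n t0 y0 a L ha hL F hFu hFL
  refine ⟨φ, hφ0, ?_, ?_⟩
  · intro t ht
    calc ‖φ t - y0‖ ≤ L * (t - t0) := hφb t ht
      _ ≤ L * a := by nlinarith [ht.1, ht.2]
      _ ≤ b := hLab
  · intro t ht
    have hmem : φ t ∈ Metric.closedBall y0 b := by
      rw [mem_closedBall, dist_eq_norm]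
      calc ‖φ t - y0‖ ≤ L * (t - t0) := hφb t ht
        _ ≤ L * a := by nlinarith [ht.1, ht.2]
        _ ≤ b := hLab
    have : F t (φ t) = f t (φ t) := by
      simp only [hF]
      rw [hπt_eq t ht, hπy_eq _ hmem]
    rw [← this]
    exact hφd t ht
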